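/- Every subring R of ℚ, with the order induced from ℚ, is a po-coherent po-ring: for every n ≥ 1 and every (a₁,…,aₙ) ∈ Rⁿ, the set {(ξ₁,…,ξₙ) ∈ Rⁿ | a₁ξ₁ + ⋯ + aₙξₙ ≥ 0 and ξᵢ ≥ 0 for all i} is a finitely generated R⁺-subsemimodule of Rⁿ. -/

import Mathlib

open Finset

private lemma sum_single_pt {n : ℕ} (c : Fin n → ℤ) (p : Fin n) (u : ℕ) :
    ∑ i, c i * ((if i = p then u else 0 : ℕ) : ℤ) = c p * u := by
  rw [Finset.sum_eq_single p]
  · simp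
  · intro i _ hip; simp [hip]
  · simp

private lemma sum_pair {n : ℕ} (c : Fin n → ℤ) (p q : Fin n) (hpq : p ≠ q) (u v : ℕ) :
    ∑ i, c i * ((if i = p then u else if i = q then v else 0 : ℕ) : ℤ)
      = c p * u + c q * v := by
  have : ∀ i : Fin n, c i * ((if i = p then u else if i = q then v else 0 : ℕ) : ℤ)
      = (if i = p then c p * u else 0) + (if i = q then c q * v else 0) := by
    intro i
    by_cases h1 : i = p
    · subst h1; simp [hpq]
    · by_cases h2 : i = q
      · subst h2; simp [h1]
      · simp [h1, h2]
  rw [Finset.sum_congr rfl fun i _ => this i, Finset.sum_add_distrib]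
  simp

private lemma move_lemma {n : ℕ} (b : Fin n → ℤ) (x : Fin n → ℕ)
    (hx : 0 ≤ ∑ i, b i * x i) (i0 : Fin n)
    (hbig : (∑ i, |b i|) ^ 2 + (∑ i, |b i|) + 1 < (x i0 : ℤ)) :
    ∃ m : Fin n → ℕ, (∀ j, m j ≤ x j) ∧
      (∀ j, (m j : ℤ) ≤ (∑ i, |b i|) ^ 2 + (∑ i, |b i|) + 1) ∧ m i0 ≠ 0 ∧
      0 ≤ ∑ i, b i * m i ∧ ∑ i, b i * m i ≤ ∑ i, b i * x i := by
  set A := ∑ i, |b i| with hA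
  have hA0 : 0 ≤ A := Finset.sum_nonneg fun i _ => abs_nonneg _
  have hA2 : 0 ≤ A ^ 2 := sq_nonneg A
  have habs : ∀ i, |b i| ≤ A := fun i =>
    Finset.single_le_sum (f := fun i => |b i|) (fun i _ => abs_nonneg _) (mem_univ i)
  have hx0 : ∀ i, (0:ℤ) ≤ (x i : ℤ) := fun i => Int.natCast_nonneg _
  rcases le_or_gt (b i0) 0 with hneg | hpos
  · rcases eq_or_lt_of_le hneg with heq | hneg
    · -- b i0 = 0 : take e_{i0}
      refine ⟨fun j => if j = i0 then 1 else 0, ?_, ?_, ?_, ?_, ?_⟩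
      · intro j
        dsimp only
        by_cases h : j = i0
        · rw [if_pos h, h]
          have := hbig
          omega
        · rw [if_neg h]; exact Nat.zero_le _
      · intro j
        dsimp only
        by_cases h : j = i0
        · rw [if_pos h]; push_cast; omega
        · rw [if_neg h]; push_cast; omega
      · dsimp only; rw [if_pos rfl]; omega
      · rw [sum_single_pt, heq]; simp
      · rw [sum_single_pt, heq]; simpa using hx
    · -- b i0 < 0 : find positive partner j
      have hbi0 : -(b i0) ≤ A := (neg_le_abs _).trans (habs i0)
      have hpart : ∃ j, 0 < b j ∧ (-(b i0) : ℤ) ≤ (x j : ℤ) := by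
        by_contra hc
        push_neg at hc
        have key : ∀ i ∈ univ, b i * (x i : ℤ) ≤ (if i = i0 then b i0 * x i0 else 0)
            + max (b i) 0 * (-(b i0) - 1) := by
          intro i _
          by_cases hi : i = i0
          · subst hi; rw [if_pos rfl, max_eq_right hneg.le]; simp
          · rw [if_neg hi, zero_add]
            rcases le_or_gt (b i) 0 with h1 | h1
            · rw [max_eq_right h1, zero_mul]
              exact mul_nonpos_of_nonpos_of_nonneg h1 (hx0 i)
            · have h2 := hc i h1
              rw [max_eq_left h1.le]
              exact mul_le_mul_of_nonneg_left (by omega) h1.le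
        have hsum := Finset.sum_le_sum key
        rw [Finset.sum_add_distrib, ← Finset.sum_mul] at hsum
        simp only [Finset.sum_ite_eq', mem_univ, if_pos] at hsum
        set M := ∑ i, max (b i) 0 with hM
        have hmaxA : M ≤ A := Finset.sum_le_sum fun i _ =>
          max_le (le_abs_self _) (abs_nonneg _)
        have hmax0 : 0 ≤ M := Finset.sum_nonneg fun i _ => le_max_right _ _
        have hb1 : b i0 * (x i0 : ℤ) ≤ -(x i0 : ℤ) := by
          nlinarith [hx0 i0]
        have hb2 : M * (-(b i0) - 1) ≤ A * (A - 1) := by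
          apply mul_le_mul hmaxA (by omega) (by omega) hA0
        nlinarith [hx, hsum, hbig]
      obtain ⟨j, hj, hxj⟩ := hpart
      have hij : i0 ≠ j := by intro h; rw [h] at hneg; omega
      have hbj : b j ≤ A := (le_abs_self _).trans (habs j)
      refine ⟨fun i => if i = i0 then (b j).toNat else if i = j then (-(b i0)).toNat else 0,
        ?_, ?_, ?_, ?_, ?_⟩
      · intro i
        dsimp only
        by_cases h1 : i = i0
        · rw [if_pos h1, h1]
          have := hbig
          omega
        · rw [if_neg h1]
          by_cases h2 : i = j
          · rw [if_pos h2, h2]; omega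
          · rw [if_neg h2]; exact Nat.zero_le _
      · intro i
        dsimp only
        by_cases h1 : i = i0
        · rw [if_pos h1]; omega
        · rw [if_neg h1]
          by_cases h2 : i = j
          · rw [if_pos h2]; omega
          · rw [if_neg h2]; push_cast; omega
      · dsimp only; rw [if_pos rfl]; omega
      · rw [sum_pair b i0 j hij, Int.toNat_of_nonneg hj.le,
          Int.toNat_of_nonneg (by omega : (0:ℤ) ≤ -(b i0))]
        have h0 : b i0 * (b j) + b j * (-(b i0)) = 0 := by ring
        linarith [h0]
      · rw [sum_pair b i0 j hij, Int.toNat_of_nonneg hj.le,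
          Int.toNat_of_nonneg (by omega : (0:ℤ) ≤ -(b i0))]
        have h0 : b i0 * (b j) + b j * (-(b i0)) = 0 := by ring
        linarith [h0, hx]
  · -- b i0 > 0
    have hbi0 : b i0 ≤ A := (le_abs_self _).trans (habs i0)
    rcases le_or_gt (b i0) (∑ i, b i * x i) with hle | hgt
    · -- single move e_{i0}
      refine ⟨fun j => if j = i0 then 1 else 0, ?_, ?_, ?_, ?_, ?_⟩
      · intro j
        dsimp only
        by_cases h : j = i0
        · rw [if_pos h, h]
          have := hbig
          omega
        · rw [if_neg h]; exact Nat.zero_le _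
      · intro j
        dsimp only
        by_cases h : j = i0
        · rw [if_pos h]; push_cast; omega
        · rw [if_neg h]; push_cast; omega
      · dsimp only; rw [if_pos rfl]; omega
      · rw [sum_single_pt]; push_cast; nlinarith
      · rw [sum_single_pt]; push_cast; linarith
    · -- find negative partner j
      have hpart : ∃ j, b j < 0 ∧ (b i0 : ℤ) ≤ (x j : ℤ) := by
        by_contra hc
        push_neg at hc
        have key : ∀ i ∈ univ, (if i = i0 then b i0 * x i0 else 0)
            + min (b i) 0 * (b i0 - 1) ≤ b i * (x i : ℤ) := by
          intro i _
          by_cases hi : i = i0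
          · subst hi; rw [if_pos rfl, min_eq_right hpos.le]; simp
          · rw [if_neg hi, zero_add]
            rcases lt_or_ge (b i) 0 with h1 | h1
            · have h2 := hc i h1
              rw [min_eq_left h1.le]
              exact mul_le_mul_of_nonpos_left (by omega) h1.le
            · rw [min_eq_right h1, zero_mul]
              exact mul_nonneg h1 (hx0 i)
        have hsum := Finset.sum_le_sum key
        rw [Finset.sum_add_distrib, ← Finset.sum_mul] at hsum
        simp only [Finset.sum_ite_eq', mem_univ, if_pos] at hsum
        set N := ∑ i, min (b i) 0 with hN
        have hminA : -A ≤ N := by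
          have : ∀ i ∈ univ, -|b i| ≤ min (b i) 0 := fun i _ =>
            le_min (neg_abs_le _) (neg_nonpos_of_nonneg (abs_nonneg _))
          have h2 := Finset.sum_le_sum this
          rw [Finset.sum_neg_distrib] at h2
          simpa using h2
        have hmin0 : N ≤ 0 := Finset.sum_nonpos fun i _ => min_le_right _ _
        have hb1 : (x i0 : ℤ) ≤ b i0 * (x i0 : ℤ) := by
          nlinarith [hx0 i0]
        have hb2 : -(A * (A - 1)) ≤ N * (b i0 - 1) := by
          have := mul_le_mul_of_nonneg_right hminA (by omega : (0:ℤ) ≤ b i0 - 1)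
          nlinarith
        nlinarith [hgt, hsum, hbig]
      obtain ⟨j, hj, hxj⟩ := hpart
      have hij : i0 ≠ j := by intro h; rw [h] at hpos; omega
      have hbj : -(b j) ≤ A := (neg_le_abs _).trans (habs j)
      refine ⟨fun i => if i = i0 then (-(b j)).toNat else if i = j then (b i0).toNat else 0,
        ?_, ?_, ?_, ?_, ?_⟩
      · intro i
        dsimp only
        by_cases h1 : i = i0
        · rw [if_pos h1, h1]
          have := hbig
          omega
        · rw [if_neg h1]
          by_cases h2 : i = j
          · rw [if_pos h2, h2]; omega
          · rw [if_neg h2]; exact Nat.zero_le _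
      · intro i
        dsimp only
        by_cases h1 : i = i0
        · rw [if_pos h1]; omega
        · rw [if_neg h1]
          by_cases h2 : i = j
          · rw [if_pos h2]; omega
          · rw [if_neg h2]; push_cast; omega
      · dsimp only; rw [if_pos rfl]; omega
      · rw [sum_pair b i0 j hij, Int.toNat_of_nonneg (by omega : (0:ℤ) ≤ -(b j)),
          Int.toNat_of_nonneg hpos.le]
        have h0 : b i0 * (-(b j)) + b j * (b i0) = 0 := by ring
        linarith [h0]
      · rw [sum_pair b i0 j hij, Int.toNat_of_nonneg (by omega : (0:ℤ) ≤ -(b j)),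
          Int.toNat_of_nonneg hpos.le]
        have h0 : b i0 * (-(b j)) + b j * (b i0) = 0 := by ring
        linarith [h0, hx]

private def gbound {n : ℕ} (b : Fin n → ℤ) : ℕ :=
  ((∑ i, |b i|) ^ 2 + (∑ i, |b i|) + 1).toNat

private lemma gbound_cast {n : ℕ} (b : Fin n → ℤ) :
    ((gbound b : ℕ) : ℤ) = (∑ i, |b i|) ^ 2 + (∑ i, |b i|) + 1 := by
  have hA0 : 0 ≤ ∑ i, |b i| := Finset.sum_nonneg fun i _ => abs_nonneg _
  have := sq_nonneg (∑ i, |b i|)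
  rw [gbound, Int.toNat_of_nonneg (by omega)]

private def gens {n : ℕ} (b : Fin n → ℤ) (f : Fin n → Fin (gbound b + 1)) : Fin n → ℕ :=
  if 0 ≤ ∑ i, b i * ((f i : ℕ) : ℤ) then (fun j => (f j : ℕ)) else (fun _ => 0)

private lemma gens_cone {n : ℕ} (b : Fin n → ℤ) (f : Fin n → Fin (gbound b + 1)) :
    0 ≤ ∑ i, b i * (gens b f i : ℤ) := by
  rw [gens]
  split
  · assumption
  · simp


private lemma decomp {n : ℕ} (b : Fin n → ℤ) :
    ∀ (N : ℕ) (x : Fin n → ℕ), (∑ j, x j) ≤ N → 0 ≤ ∑ i, b i * x i →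
      ∃ c : (Fin n → Fin (gbound b + 1)) → ℕ, ∀ j, x j = ∑ f, c f * gens b f j := by
  intro N
  induction N with
  | zero =>
    intro x hx _
    have hx0 : ∀ j, x j = 0 := by
      intro j
      have := Finset.single_le_sum (f := x) (fun i _ => Nat.zero_le _) (mem_univ j)
      omega
    exact ⟨fun _ => 0, fun j => by simp [hx0 j]⟩
  | succ N ih =>
    intro x hx hc
    by_cases hsmall : ∀ j, x j ≤ gbound b
    · -- x is itself (essentially) a generator
      set f0 : Fin n → Fin (gbound b + 1) := fun j => ⟨x j, Nat.lt_succ_of_le (hsmall j)⟩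
        with hf0
      have hval : ∀ j, ((f0 j : ℕ)) = x j := fun j => rfl
      have hgf0 : gens b f0 = fun j => x j := by
        rw [gens, if_pos]
        convert hc using 2
      refine ⟨fun f => if f = f0 then 1 else 0, fun j => ?_⟩
      rw [Finset.sum_eq_single f0]
      · simp [hgf0]
      · intro f _ hf; simp [hf]
      · simp
    · push_neg at hsmall
      obtain ⟨i0, hbig⟩ := hsmall
      have hbig' : (∑ i, |b i|) ^ 2 + (∑ i, |b i|) + 1 < (x i0 : ℤ) := by
        have := gbound_cast b
        omega
      obtain ⟨m, hle, hbd, hne, hm0, hmx⟩ := move_lemma b x hc i0 hbig'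
      set x' : Fin n → ℕ := fun j => x j - m j with hx'
      have hadd : ∀ j, x' j + m j = x j := fun j => Nat.sub_add_cancel (hle j)
      have hsum : ∑ j, x' j + ∑ j, m j = ∑ j, x j := by
        rw [← Finset.sum_add_distrib]
        exact Finset.sum_congr rfl fun j _ => hadd j
      have hm1 : 1 ≤ ∑ j, m j := by
        have := Finset.single_le_sum (f := m) (fun i _ => Nat.zero_le _) (mem_univ i0)
        omega
      have hcast : ∀ j, ((x' j : ℕ) : ℤ) = (x j : ℤ) - (m j : ℤ) := by
        intro j; rw [hx']; push_cast [Nat.cast_sub (hle j)]; ring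
      have hc' : 0 ≤ ∑ i, b i * x' i := by
        have : ∑ i, b i * (x' i : ℤ) = ∑ i, b i * x i - ∑ i, b i * m i := by
          rw [← Finset.sum_sub_distrib]
          exact Finset.sum_congr rfl fun i _ => by rw [hcast i]; ring
        rw [this]; omega
      obtain ⟨c', hcdec⟩ := ih x' (by omega) hc'
      have hmlt : ∀ j, m j < gbound b + 1 := by
        intro j
        have h1 := hbd j
        have h2 := gbound_cast b
        omega
      set fm : Fin n → Fin (gbound b + 1) := fun j => ⟨m j, hmlt j⟩ with hfm
      have hgfm : gens b fm = fun j => m j := by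
        rw [gens, if_pos]
        convert hm0 using 2
      refine ⟨fun f => c' f + (if f = fm then 1 else 0), fun j => ?_⟩
      have : ∑ f, (c' f + if f = fm then 1 else 0) * gens b f j
          = (∑ f, c' f * gens b f j) + ∑ f, (if f = fm then 1 else 0) * gens b f j := by
        rw [← Finset.sum_add_distrib]
        exact Finset.sum_congr rfl fun f _ => by ring
      rw [this]
      have h2 : ∑ f, (if f = fm then 1 else 0) * gens b f j = m j := by
        rw [Finset.sum_eq_single fm]
        · simp [hgfm]
        · intro f _ hf; simp [hf]
        · simp
      rw [h2, ← hcdec j]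
      have := hadd j
      omega

private lemma gordan {n : ℕ} (b : Fin n → ℤ) :
    ∃ (k : ℕ) (G : Fin k → Fin n → ℕ),
      (∀ l, 0 ≤ ∑ i, b i * (G l i : ℤ)) ∧
      (∀ x : Fin n → ℕ, 0 ≤ ∑ i, b i * (x i : ℤ) →
        ∃ c : Fin k → ℕ, ∀ j, x j = ∑ l, c l * G l j) := by
  classical
  set e := (Fintype.equivFin (Fin n → Fin (gbound b + 1)))
  refine ⟨_, fun l => gens b (e.symm l), fun l => gens_cone b (e.symm l), ?_⟩
  intro x hx
  obtain ⟨c, hdec⟩ := decomp b (∑ j, x j) x le_rfl hx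
  refine ⟨fun l => c (e.symm l), fun j => ?_⟩
  rw [hdec j]
  exact (Equiv.sum_comp e.symm (fun f => c f * gens b f j)).symm

private lemma inv_den_mem (R : Subring ℚ) (q : ℚ) (hq : q ∈ R) : ((q.den : ℚ))⁻¹ ∈ R := by
  have hcop : IsCoprime (q.num) (q.den : ℤ) := by
    rw [Int.isCoprime_iff_gcd_eq_one]
    simpa [Int.gcd] using q.reduced
  obtain ⟨u, v, huv⟩ := hcop
  have hqd : q * (q.den : ℚ) = (q.num : ℚ) := Rat.mul_den_eq_num q
  have key : ((u : ℚ) * q + (v : ℚ)) * (q.den : ℚ) = 1 := by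
    calc ((u : ℚ) * q + (v : ℚ)) * (q.den : ℚ)
        = (u : ℚ) * (q * q.den) + v * q.den := by ring
      _ = ((u * q.num + v * q.den : ℤ) : ℚ) := by rw [hqd]; push_cast; ring
      _ = 1 := by rw [huv]; simp
  rw [inv_eq_of_mul_eq_one_left key]
  exact add_mem (mul_mem (intCast_mem R u) hq) (intCast_mem R v)

private lemma den_dvd_cast (q : ℚ) (m : ℕ) (h : q.den ∣ m) :
    ((q.num * ((m / q.den : ℕ) : ℤ) : ℤ) : ℚ) = q * m := by
  obtain ⟨t, ht⟩ := h
  have hd : (0:ℕ) < q.den := q.pos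
  have hdiv : m / q.den = t := by rw [ht]; exact Nat.mul_div_cancel_left t hd
  rw [hdiv, ht]
  have hqd : q * (q.den : ℚ) = (q.num : ℚ) := Rat.mul_den_eq_num q
  push_cast
  rw [← mul_assoc, hqd]

/-- Every subring `R` of `ℚ`, with the order induced from `ℚ`, is a
po-coherent po-ring: for every `n ≥ 1` and every `(a₁,…,aₙ) ∈ Rⁿ`, the solution set
`{(ξ₁,…,ξₙ) ∈ Rⁿ | a₁ξ₁ + ⋯ + aₙξₙ ≥ 0 and ξᵢ ≥ 0 for all i}` is a finitely generated
`R⁺`-subsemimodule of `Rⁿ`, i.e. the set of all `R⁺`-linear combinations of some finite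
subset of `Rⁿ`. -/
theorem subring_rat_poCoherent (R : Subring ℚ) (n : ℕ) (hn : 1 ≤ n) (a : Fin n → R) :
    ∃ (k : ℕ) (g : Fin k → Fin n → R),
      {ξ : Fin n → R | 0 ≤ ((∑ i, a i * ξ i : R) : ℚ) ∧ ∀ i, 0 ≤ (ξ i : ℚ)}
        = {ξ : Fin n → R | ∃ Y : Fin k → R, (∀ i, 0 ≤ (Y i : ℚ)) ∧
            ξ = fun j => ∑ i, g i j * Y i} := by
  classical
  set D : ℕ := ∏ i, (a i : ℚ).den with hD
  have hDpos : 0 < D := Finset.prod_pos fun i _ => (a i : ℚ).pos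
  have hD0 : (0:ℚ) < (D : ℚ) := by exact_mod_cast hDpos
  set b : Fin n → ℤ := fun i => (a i : ℚ).num * ((D / (a i : ℚ).den : ℕ) : ℤ) with hb
  have hba : ∀ i, ((b i : ℤ) : ℚ) = (a i : ℚ) * D := fun i =>
    den_dvd_cast _ _ (Finset.dvd_prod_of_mem _ (Finset.mem_univ i))
  obtain ⟨k, G, hGcone, hGdec⟩ := gordan b
  refine ⟨k, fun l j => ((G l j : ℕ) : R), ?_⟩
  ext ξ
  simp only [Set.mem_setOf_eq]
  constructor
  · rintro ⟨h1, h2⟩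
    have h1' : (0:ℚ) ≤ ∑ i, (a i : ℚ) * (ξ i : ℚ) := by
      have hco : ((∑ i, a i * ξ i : R) : ℚ) = ∑ i, (a i : ℚ) * (ξ i : ℚ) := by
        push_cast; ring
      rwa [hco] at h1
    set d : ℕ := ∏ i, (ξ i : ℚ).den with hd
    have hdpos : 0 < d := Finset.prod_pos fun i _ => (ξ i : ℚ).pos
    have hd0 : (0:ℚ) < (d : ℚ) := by exact_mod_cast hdpos
    have hinv : ((d : ℚ))⁻¹ ∈ R := by
      have hcast : ((d:ℕ):ℚ) = ∏ i, ((ξ i : ℚ).den : ℚ) := by rw [hd, Nat.cast_prod]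
      rw [hcast, ← Finset.prod_inv_distrib]
      exact Subring.prod_mem R fun i _ => inv_den_mem R _ (ξ i).2
    have hdvd : ∀ i, (ξ i : ℚ).den ∣ d := fun i =>
      Finset.dvd_prod_of_mem _ (Finset.mem_univ i)
    set z : Fin n → ℤ := fun i => (ξ i : ℚ).num * ((d / (ξ i : ℚ).den : ℕ) : ℤ) with hz
    have hzq : ∀ i, ((z i : ℤ) : ℚ) = (ξ i : ℚ) * d := fun i => den_dvd_cast _ _ (hdvd i)
    have hznn : ∀ i, 0 ≤ z i := by
      intro i
      have : (0:ℚ) ≤ ((z i : ℤ) : ℚ) := by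
        rw [hzq i]; exact mul_nonneg (h2 i) hd0.le
      exact_mod_cast this
    set x : Fin n → ℕ := fun i => (z i).toNat with hxdef
    have hxq : ∀ i, ((x i : ℕ) : ℚ) = (ξ i : ℚ) * d := by
      intro i
      have h1 : ((x i : ℕ) : ℤ) = z i := Int.toNat_of_nonneg (hznn i)
      have h2 : (((x i : ℕ) : ℤ) : ℚ) = ((z i : ℤ) : ℚ) := by exact_mod_cast h1
      rw [← hzq i, ← h2]; push_cast; ring
    have hcone : 0 ≤ ∑ i, b i * (x i : ℤ) := by
      have hq : ((∑ i, b i * (x i : ℤ) : ℤ) : ℚ)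
          = ((D : ℚ) * d) * ∑ i, (a i : ℚ) * (ξ i : ℚ) := by
        push_cast
        rw [Finset.mul_sum]
        refine Finset.sum_congr rfl fun i _ => ?_
        rw [hba i, hxq i]
        ring
      have : (0:ℚ) ≤ ((∑ i, b i * (x i : ℤ) : ℤ) : ℚ) := by
        rw [hq]
        exact mul_nonneg (by positivity) h1'
      exact_mod_cast this
    obtain ⟨c, hc⟩ := hGdec x hcone
    refine ⟨fun l => ((c l : ℕ) : R) * ⟨(d:ℚ)⁻¹, hinv⟩, fun l => ?_, ?_⟩
    · show (0:ℚ) ≤ _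
      push_cast
      positivity
    · funext j
      apply Subtype.ext
      have hrhs : ((∑ l, ((G l j : ℕ) : R) * (((c l : ℕ) : R) * ⟨(d:ℚ)⁻¹, hinv⟩) : R) : ℚ)
          = ∑ l, (G l j : ℚ) * ((c l : ℚ) * ((d:ℚ))⁻¹) := by
        push_cast; rfl
      rw [hrhs]
      have hsum : ∑ l, (G l j : ℚ) * ((c l : ℚ) * ((d:ℚ))⁻¹)
          = (∑ l, (c l : ℚ) * (G l j : ℚ)) * ((d:ℚ))⁻¹ := by
        rw [Finset.sum_mul]
        exact Finset.sum_congr rfl fun l _ => by ring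
      rw [hsum]
      have hxc : ((x j : ℕ) : ℚ) = ∑ l, (c l : ℚ) * (G l j : ℚ) := by
        have := hc j
        exact_mod_cast congrArg (fun t : ℕ => (t : ℚ)) this
      rw [← hxc, hxq j]
      field_simp
  · rintro ⟨Y, hY, rfl⟩
    constructor
    · have hcoe : ((∑ i, a i * (∑ l, ((G l i : ℕ) : R) * Y l) : R) : ℚ)
          = ∑ l, (Y l : ℚ) * ∑ i, (a i : ℚ) * (G l i : ℚ) := by
        push_cast
        calc ∑ i, (a i : ℚ) * ∑ l, (G l i : ℚ) * (Y l : ℚ)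
            = ∑ i, ∑ l, (Y l : ℚ) * ((a i : ℚ) * (G l i : ℚ)) := by
              refine Finset.sum_congr rfl fun i _ => ?_
              rw [Finset.mul_sum]
              exact Finset.sum_congr rfl fun l _ => by ring
          _ = ∑ l, ∑ i, (Y l : ℚ) * ((a i : ℚ) * (G l i : ℚ)) := Finset.sum_comm
          _ = ∑ l, (Y l : ℚ) * ∑ i, (a i : ℚ) * (G l i : ℚ) := by
              exact Finset.sum_congr rfl fun l _ => (Finset.mul_sum _ _ _).symm
      rw [hcoe]
      refine Finset.sum_nonneg fun l _ => mul_nonneg (hY l) ?_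
      have hbg : (0:ℚ) ≤ ∑ i, (b i : ℚ) * (G l i : ℚ) := by exact_mod_cast hGcone l
      have heq : ∑ i, (b i : ℚ) * (G l i : ℚ) = (D:ℚ) * ∑ i, (a i : ℚ) * (G l i : ℚ) := by
        rw [Finset.mul_sum]
        refine Finset.sum_congr rfl fun i _ => by rw [hba i]; ring
      rw [heq] at hbg
      nlinarith [hbg, hD0]
    · intro i
      show (0:ℚ) ≤ ((∑ l, ((G l i : ℕ) : R) * Y l : R) : ℚ)
      push_cast
      exact Finset.sum_nonneg fun l _ => mul_nonneg (by positivity) (hY l)
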